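/- Let a, b > 0 and λ > −a, and set ρ* ∈ (0,1) with F(ρ*) = 0 where F(ρ) = (a+λρ)(1−ρ) − bρ, G(ρ) = (a+λρ)(1−ρ) + bρ, χ(ρ) = ρ(1−ρ). Then G(ρ*) + 2F'(ρ*)χ(ρ*) has the same sign as λ, i.e. G(ρ*) + 2F'(ρ*)χ(ρ*) = λ·c for some c > 0 (equivalently, it is positive iff λ > 0, zero iff λ = 0, negative iff λ < 0). -/

import Mathlib

/-- With `F(ρ) = (a+λρ)(1−ρ) − bρ`, `G(ρ) = (a+λρ)(1−ρ) + bρ`, `χ(ρ) = ρ(1−ρ)` and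
`ρ* ∈ (0,1)` the root of `F`, the quantity `G(ρ*) + 2F'(ρ*)χ(ρ*)` has the same sign
as `λ`: it equals `λ·c` for some `c > 0`. -/
theorem stmt10 (a b l ρstar : ℝ) (ha : 0 < a) (hb : 0 < b) (hl : -a < l)
    (hρ : ρstar ∈ Set.Ioo (0 : ℝ) 1)
    (hzero : (a + l * ρstar) * (1 - ρstar) - b * ρstar = 0) :
    ∃ c : ℝ, 0 < c ∧
      ((a + l * ρstar) * (1 - ρstar) + b * ρstar)
        + 2 * deriv (fun ρ : ℝ => (a + l * ρ) * (1 - ρ) - b * ρ) ρstar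
          * (ρstar * (1 - ρstar))
      = l * c := by
  obtain ⟨h0, h1⟩ := hρ
  have hD : HasDerivAt (fun ρ : ℝ => (a + l * ρ) * (1 - ρ) - b * ρ)
      (l * (1 - ρstar) + (a + l * ρstar) * (-1) - b) ρstar := by
    have h1 : HasDerivAt (fun ρ : ℝ => a + l * ρ) l ρstar := by
      simpa using ((hasDerivAt_id ρstar).const_mul l).const_add a
    have h2 : HasDerivAt (fun ρ : ℝ => 1 - ρ) (-1) ρstar := by
      simpa using (hasDerivAt_id ρstar).const_sub 1
    have h3 := (h1.mul h2).sub ((hasDerivAt_id ρstar).const_mul b)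
    exact h3.congr_deriv (by ring)
  rw [hD.deriv]
  have h2 : (0:ℝ) < 1 - ρstar := by linarith
  refine ⟨2 * ρstar * (1 - ρstar) ^ 2, by positivity, ?_⟩
  linear_combination (1 - 2 * ρstar) * hzero
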